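/- Let q > 2 and k ∈ ℕ with k < √q − 1. Let S be a set of at least q² − kq points of AG(2,q) labeled with q+1 labels satisfying the closure condition. If not all points of S share a single label, then there exist at least two distinct labels each occurring at least q − k times among the points of S. -/

import Mathlib

open Finset

section Helpers

open scoped Classical

variable {F : Type*} [Field F]

/-- slope of the segment from `y` to `z` (`none` = vertical). -/
noncomputable def slp (y z : Fin 2 → F) : Option F :=
  if z 0 = y 0 then none else some ((z 1 - y 1) / (z 0 - y 0))

/-- direction vector of a slope -/
def dirv : Option F → (Fin 2 → F)
  | none => ![0, 1]
  | some c => ![1, c]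

lemma col3 {y d p₁ p₂ p₃ : Fin 2 → F} {t₁ t₂ t₃ : F}
    (h₁ : p₁ = y + t₁ • d) (h₂ : p₂ = y + t₂ • d) (h₃ : p₃ = y + t₃ • d) :
    Collinear F ({p₁, p₂, p₃} : Set (Fin 2 → F)) := by
  rw [collinear_iff_of_mem (Set.mem_insert p₁ {p₂, p₃})]
  refine ⟨d, ?_⟩
  intro p hp
  simp only [Set.mem_insert_iff, Set.mem_singleton_iff] at hp
  rcases hp with rfl | rfl | rfl
  · exact ⟨0, by rw [h₁]; funext i; simp⟩
  · exact ⟨t₂ - t₁, by rw [h₁, h₂]; funext i; simp [vadd_eq_add]; ring⟩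
  · exact ⟨t₃ - t₁, by rw [h₁, h₃]; funext i; simp [vadd_eq_add]; ring⟩

lemma param_of_col {a b c : Fin 2 → F} (h : Collinear F ({a, b, c} : Set (Fin 2 → F)))
    (hab : a ≠ b) : ∃ t : F, c = a + t • (b - a) := by
  rw [collinear_iff_of_mem (Set.mem_insert a {b, c})] at h
  obtain ⟨v, hv⟩ := h
  obtain ⟨rb, hb⟩ := hv b (by simp)
  obtain ⟨rc, hc⟩ := hv c (by simp)
  have hrb : rb ≠ 0 := by
    rintro rfl
    apply hab
    rw [hb]; funext i; simp
  refine ⟨rc / rb, ?_⟩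
  rw [hc, hb]
  funext i
  simp [vadd_eq_add]
  field_simp
  ring

lemma mem_line_iff (y : Fin 2 → F) (m : Option F) (z : Fin 2 → F) :
    (z ≠ y ∧ slp y z = m) ↔ ∃ t : F, t ≠ 0 ∧ z = y + t • dirv m := by
  constructor
  · rintro ⟨hzy, hm⟩
    by_cases h0 : z 0 = y 0
    · have hmn : m = none := by simp [slp, h0] at hm; exact hm.symm
      subst hmn
      refine ⟨z 1 - y 1, ?_, ?_⟩
      · intro h1
        apply hzy
        have h1' : z 1 = y 1 := by linear_combination h1
        funext i; fin_cases i
        · exact h0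
        · exact h1'
      · funext i; fin_cases i <;> simp [dirv, h0] <;> ring
    · have hms : m = some ((z 1 - y 1) / (z 0 - y 0)) := by
        simp [slp, h0] at hm; exact hm.symm
      subst hms
      refine ⟨z 0 - y 0, sub_ne_zero.mpr h0, ?_⟩
      funext i; fin_cases i
      · simp [dirv]
      · simp [dirv]
        rw [mul_comm, div_mul_cancel₀ _ (sub_ne_zero.mpr h0)]
        ring
  · rintro ⟨t, ht, rfl⟩
    cases m with
    | none =>
      refine ⟨?_, ?_⟩
      · intro h
        apply ht
        have := congrFun h 1
        simpa [dirv] using this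
      · simp [slp, dirv]
    | some c =>
      have h0 : (y + t • dirv (some c)) 0 = y 0 + t := by simp [dirv]
      refine ⟨?_, ?_⟩
      · intro h
        apply ht
        have := congrFun h 0
        simpa [dirv] using this
      · simp only [slp, dirv]
        refine (if_neg ?_).trans ?_; swap
        · congr 1
          simp
          field_simp
        · simp [ht]

lemma dirv_param_eq {y : Fin 2 → F} {m : Option F} {z : Fin 2 → F} (t : F)
    (h : z = y + t • dirv m) : z = y ∨ slp y z = m := by
  by_cases ht : t = 0
  · left; subst ht; rw [h]; funext i; simp
  · right; exact ((mem_line_iff y m z).mpr ⟨t, ht, h⟩).2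

lemma line_card [Fintype F] (y : Fin 2 → F) (m : Option F) :
    (Finset.univ.filter (fun z => z ≠ y ∧ slp y z = m)).card = Fintype.card F - 1 := by
  classical
  have hinj : Function.Injective (fun t : F => y + t • dirv m) := by
    intro s t h
    cases m with
    | none => have := congrFun h 1; simpa [dirv] using this
    | some c => have := congrFun h 0; simpa [dirv] using this
  have hset : Finset.univ.filter (fun z => z ≠ y ∧ slp y z = m)
      = (Finset.univ.erase (0 : F)).image (fun t => y + t • dirv m) := by
    ext z
    simp only [mem_filter, mem_univ, true_and, mem_image, mem_erase]
    rw [mem_line_iff]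
    constructor
    · rintro ⟨t, ht, rfl⟩; exact ⟨t, ⟨ht, trivial⟩, rfl⟩
    · rintro ⟨t, ⟨ht, -⟩, rfl⟩; exact ⟨t, ht, rfl⟩
  rw [hset, Finset.card_image_of_injective _ hinj, Finset.card_erase_of_mem (mem_univ _),
    Finset.card_univ]

/-- the transverse coordinate (constant on lines of slope `m`). -/
def transv : Option F → (Fin 2 → F) → F
  | none, z => z 0
  | some c, z => z 1 - c * z 0

lemma transv_eq_iff (m : Option F) (z z' : Fin 2 → F) :
    transv m z' = transv m z ↔ ∃ t : F, z' = z + t • dirv m := by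
  constructor
  · intro h
    cases m with
    | none =>
      refine ⟨z' 1 - z 1, ?_⟩
      funext i; fin_cases i
      · simp only [transv] at h
        simpa [dirv] using h
      · simp [dirv]
    | some c =>
      refine ⟨z' 0 - z 0, ?_⟩
      funext i; fin_cases i
      · simp [dirv]
      · simp only [transv] at h
        simp [dirv]
        linear_combination h
  · rintro ⟨t, rfl⟩
    cases m with
    | none => simp [transv, dirv]
    | some c =>
      simp only [transv, dirv, Pi.add_apply, Pi.smul_apply, smul_eq_mul,
        Matrix.cons_val_one, Matrix.cons_val_zero, Matrix.head_cons]
      ring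

lemma transv_affine (m : Option F) (a b : Fin 2 → F) (t : F) :
    transv m (a + t • (b - a)) = transv m a + t * (transv m b - transv m a) := by
  cases m with
  | none => simp only [transv, Pi.add_apply, Pi.smul_apply, Pi.sub_apply, smul_eq_mul]; try ring
  | some c => simp only [transv, Pi.add_apply, Pi.smul_apply, Pi.sub_apply, smul_eq_mul]; ring

lemma fiber_card [Fintype F] (m : Option F) (c : F) :
    (Finset.univ.filter (fun z => transv m z = c)).card = Fintype.card F := by
  classical
  obtain ⟨z₀, hz₀⟩ : ∃ z₀ : Fin 2 → F, transv m z₀ = c := by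
    cases m with
    | none => exact ⟨![c, 0], by simp [transv]⟩
    | some c' => exact ⟨![0, c], by simp [transv]⟩
  have hinj : Function.Injective (fun t : F => z₀ + t • dirv m) := by
    intro s t h
    cases m with
    | none => have := congrFun h 1; simpa [dirv] using this
    | some c' => have := congrFun h 0; simpa [dirv] using this
  have hset : Finset.univ.filter (fun z => transv m z = c)
      = Finset.univ.image (fun t : F => z₀ + t • dirv m) := by
    ext z
    simp only [mem_filter, mem_univ, true_and, mem_image]
    constructor
    · intro h
      obtain ⟨t, ht⟩ := (transv_eq_iff m z₀ z).mp (by rw [h, hz₀])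
      exact ⟨t, ht.symm⟩
    · rintro ⟨t, rfl⟩
      rw [← hz₀]
      exact (transv_eq_iff m z₀ _).mpr ⟨t, rfl⟩
  rw [hset, Finset.card_image_of_injective _ hinj, Finset.card_univ]

lemma transv_add (m : Option F) (a b : Fin 2 → F) :
    transv m (a + b) = transv m a + transv m b := by
  cases m <;> simp only [transv, Pi.add_apply] <;> ring

lemma transv_smul (m : Option F) (t : F) (a : Fin 2 → F) :
    transv m (t • a) = t * transv m a := by
  cases m <;> simp only [transv, Pi.smul_apply, smul_eq_mul] <;> ring

end Helpers

/-- The closure condition: if a point `Q` of `S` lies on an affine line containing two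
distinct points of `S` with the same label, then `Q` also has that label. -/
def ClosureCond {F : Type*} [Field F] {Λ : Type*}
    (S : Set (Fin 2 → F)) (label : (Fin 2 → F) → Λ) : Prop :=
  ∀ P Q R : Fin 2 → F, P ∈ S → Q ∈ S → R ∈ S → P ≠ Q → label P = label Q →
    Collinear F ({P, Q, R} : Set (Fin 2 → F)) → label R = label P

set_option maxHeartbeats 1000000 in
theorem stmt5 {F : Type*} [Field F] [Fintype F] (q k : ℕ)
    (hcard : Fintype.card F = q) (hq : 2 < q)
    (hk : (k : ℝ) < Real.sqrt q - 1)
    (S : Set (Fin 2 → F)) (label : (Fin 2 → F) → Fin (q + 1))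
    (hS : (q : ℤ) ^ 2 - k * q ≤ S.ncard)
    (hclosure : ClosureCond S label)
    (hnot : ¬ ∃ v, ∀ x ∈ S, label x = v) :
    ∃ v₁ v₂ : Fin (q + 1), v₁ ≠ v₂ ∧
      q - k ≤ {x ∈ S | label x = v₁}.ncard ∧
      q - k ≤ {x ∈ S | label x = v₂}.ncard := by
  classical
  by_contra hcon
  push_neg at hcon hnot
  -- arithmetic facts
  have hkq : (k + 1) ^ 2 < q := by
    have h1 : (k : ℝ) + 1 < Real.sqrt q := by linarith
    have h0 : (0:ℝ) ≤ (k:ℝ) + 1 := by positivity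
    have h2 : ((k : ℝ) + 1) ^ 2 < Real.sqrt q ^ 2 := by nlinarith [Real.sqrt_nonneg (q:ℝ)]
    rw [Real.sq_sqrt (by positivity)] at h2
    have : (((k+1)^2 : ℕ) : ℝ) < (q : ℝ) := by push_cast; convert h2 using 2 <;> push_cast <;> ring
    exact_mod_cast this
  have hq3 : k + 3 ≤ q := by
    rcases Nat.eq_zero_or_pos k with rfl | hk1
    · omega
    · nlinarith [hkq]
  have hkqZ : ((k:ℤ) + 1) ^ 2 < (q:ℤ) := by exact_mod_cast hkq
  have hq3Z : (k:ℤ) + 3 ≤ (q:ℤ) := by exact_mod_cast hq3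
  set Sf : Finset (Fin 2 → F) := S.toFinset with hSf
  have hmemSf : ∀ x, x ∈ Sf ↔ x ∈ S := fun x => Set.mem_toFinset
  set Cf : Fin (q+1) → Finset (Fin 2 → F) := fun v => Sf.filter (fun x => label x = v) with hCf
  have hCmem : ∀ v x, x ∈ Cf v ↔ (x ∈ Sf ∧ label x = v) := by
    intro v x; simp [hCf, Finset.mem_filter]
  have hncard : ∀ v, {x ∈ S | label x = v}.ncard = (Cf v).card := by
    intro v
    have h : {x ∈ S | label x = v} = ↑(Cf v) := by
      ext x
      simp [hCf, Finset.mem_coe, Finset.mem_filter, hmemSf]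
    rw [h, Set.ncard_coe_finset]
  have hNcard : ((q:ℤ))^2 - k*q ≤ (Sf.card : ℤ) := by
    rw [hSf, ← Set.ncard_eq_toFinset_card']; exact hS
  have hcardF2 : Fintype.card (Fin 2 → F) = q^2 := by
    rw [Fintype.card_fun, hcard, Fintype.card_fin]
  have hNle : (Sf.card : ℤ) ≤ (q:ℤ)^2 := by
    have := Finset.card_le_univ Sf
    rw [hcardF2] at this
    exact_mod_cast this
  have hmiss : ((((Finset.univ : Finset (Fin 2 → F))) \ Sf).card : ℤ) ≤ (k:ℤ) * q := by
    rw [Finset.card_sdiff_of_subset (Finset.subset_univ _), Finset.card_univ, hcardF2]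
    have h1 : Sf.card ≤ q^2 := by exact_mod_cast hNle
    push_cast [h1]
    linarith
  have hsum : ∑ v, (Cf v).card = Sf.card :=
    (Finset.card_eq_sum_card_fiberwise (fun x _ => Finset.mem_univ (label x))).symm
  -- closure adapter
  have hcl : ∀ P Q R : Fin 2 → F, P ∈ Sf → Q ∈ Sf → R ∈ Sf → P ≠ Q → label P = label Q →
      (∃ (y d : Fin 2 → F) (t₁ t₂ t₃ : F), P = y + t₁ • d ∧ Q = y + t₂ • d ∧ R = y + t₃ • d) →
      label R = label P := by
    rintro P Q R hP hQ hR hne hlab ⟨y, d, t₁, t₂, t₃, h₁, h₂, h₃⟩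
    exact hclosure P Q R ((hmemSf P).mp hP) ((hmemSf Q).mp hQ) ((hmemSf R).mp hR) hne hlab
      (col3 h₁ h₂ h₃)
  -- pigeonhole: a big class exists
  have hbig : ∃ v, (q:ℤ) - k ≤ ((Cf v).card : ℤ) := by
    by_contra hno
    push_neg at hno
    have hle : ((Sf.card : ℤ)) ≤ ((q:ℤ)+1) * ((q:ℤ) - k - 1) := by
      rw [← hsum]
      push_cast
      calc ∑ v : Fin (q+1), ((Cf v).card:ℤ)
          ≤ ∑ _v : Fin (q+1), ((q:ℤ) - k - 1) :=
            Finset.sum_le_sum (fun v _ => by have := hno v; omega)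
        _ = ((q:ℤ)+1) * ((q:ℤ) - k - 1) := by
            rw [Finset.sum_const, Finset.card_univ, Fintype.card_fin]
            push_cast; ring
    nlinarith [hNcard]
  obtain ⟨v₁, hv₁⟩ := hbig
  have hv₁n : q - k ≤ {x ∈ S | label x = v₁}.ncard := by
    rw [hncard]; omega
  have hsmall : ∀ v, v ≠ v₁ → ((Cf v).card : ℤ) ≤ (q:ℤ) - k - 1 := by
    intro v hv
    have h := hcon v₁ v (Ne.symm hv) hv₁n
    rw [hncard] at h
    omega
  have hvne : ∀ v : Fin (q+1), ∃ P ∈ Sf, label P ≠ v := by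
    intro v
    obtain ⟨x, hx, hxv⟩ := hnot v
    exact ⟨x, (hmemSf x).mpr hx, hxv⟩
  -- injectivity of slope map on C v₁ from an outside point
  have hinj : ∀ P ∈ Sf, label P ≠ v₁ → Set.InjOn (slp P) ↑(Cf v₁) := by
    intro P hPS hPl x hx z hz hxz
    by_contra hne
    rw [Finset.mem_coe, hCmem] at hx hz
    have hxP : x ≠ P := fun h => hPl (by rw [← h, hx.2])
    have hzP : z ≠ P := fun h => hPl (by rw [← h, hz.2])
    obtain ⟨s, hs0, hsx⟩ := (mem_line_iff P (slp P x) x).mp ⟨hxP, rfl⟩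
    obtain ⟨t, ht0, htz⟩ := (mem_line_iff P (slp P x) z).mp ⟨hzP, hxz.symm⟩
    have hlP := hcl x z P hx.1 hz.1 hPS hne (hx.2.trans hz.2.symm)
      ⟨P, dirv (slp P x), s, t, 0, hsx, htz, by simp⟩
    exact hPl (by rw [hlP, hx.2])
  have hs1le : (Cf v₁).card ≤ q + 1 := by
    obtain ⟨P, hPS, hPl⟩ := hvne v₁
    have h := Finset.card_le_card_of_injOn (slp P)
      (fun a _ => Finset.mem_univ (slp P a)) (hinj P hPS hPl)
    rwa [Finset.card_univ, Fintype.card_option, hcard] at h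
  have hs1ge : (q:ℤ) ≤ ((Cf v₁).card : ℤ) := by
    have hsplit : (Cf v₁).card + ∑ v ∈ Finset.univ.erase v₁, (Cf v).card = ∑ v, (Cf v).card :=
      Finset.add_sum_erase _ (fun v => (Cf v).card) (Finset.mem_univ v₁)
    have hbound : (∑ v ∈ Finset.univ.erase v₁, ((Cf v).card:ℤ)) ≤ (q:ℤ) * ((q:ℤ) - k - 1) := by
      calc ∑ v ∈ Finset.univ.erase v₁, ((Cf v).card:ℤ)
          ≤ ∑ _v ∈ Finset.univ.erase v₁, ((q:ℤ) - k - 1) :=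
            Finset.sum_le_sum (fun v hv => hsmall v (Finset.mem_erase.mp hv).1)
        _ = (q:ℤ) * ((q:ℤ) - k - 1) := by
            rw [Finset.sum_const, Finset.card_erase_of_mem (Finset.mem_univ _),
              Finset.card_univ, Fintype.card_fin]
            push_cast; ring
    have hcast : ((Cf v₁).card:ℤ) + ∑ v ∈ Finset.univ.erase v₁, ((Cf v).card:ℤ) = (Sf.card:ℤ) := by
      rw [← hsum, ← hsplit]; push_cast; ring
    linarith [hNcard]
  have hcases : (Cf v₁).card = q ∨ (Cf v₁).card = q + 1 := by omega
  rcases hcases with hc1 | hc1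
  · -- Case |C v₁| = q
    have hc1Z : ((Cf v₁).card:ℤ) = (q:ℤ) := by exact_mod_cast hc1
    -- every other class has at least 2 points
    have h2 : ∀ v, v ≠ v₁ → 2 ≤ (Cf v).card := by
      intro w hw
      have hsplit : (Cf v₁).card + ∑ v ∈ Finset.univ.erase v₁, (Cf v).card = ∑ v, (Cf v).card :=
        Finset.add_sum_erase _ (fun v => (Cf v).card) (Finset.mem_univ v₁)
      have hwmem : w ∈ Finset.univ.erase v₁ := Finset.mem_erase.mpr ⟨hw, Finset.mem_univ _⟩
      have hsplit2 : (Cf w).card + ∑ v ∈ (Finset.univ.erase v₁).erase w, (Cf v).card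
          = ∑ v ∈ Finset.univ.erase v₁, (Cf v).card :=
        Finset.add_sum_erase _ (fun v => (Cf v).card) hwmem
      have hbound : (∑ v ∈ (Finset.univ.erase v₁).erase w, ((Cf v).card:ℤ))
          ≤ ((q:ℤ) - 1) * ((q:ℤ) - k - 1) := by
        calc ∑ v ∈ (Finset.univ.erase v₁).erase w, ((Cf v).card:ℤ)
            ≤ ∑ _v ∈ (Finset.univ.erase v₁).erase w, ((q:ℤ) - k - 1) :=
              Finset.sum_le_sum (fun v hv =>
                hsmall v (Finset.mem_erase.mp (Finset.mem_erase.mp hv).2).1)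
          _ = ((q:ℤ) - 1) * ((q:ℤ) - k - 1) := by
              rw [Finset.sum_const, Finset.card_erase_of_mem hwmem,
                Finset.card_erase_of_mem (Finset.mem_univ _), Finset.card_univ,
                Fintype.card_fin, nsmul_eq_mul]
              have h9 : q + 1 - 1 - 1 = q - 1 := by omega
              rw [h9, Nat.cast_sub (by omega : 1 ≤ q)]
              push_cast; ring
      have hcast : ((Cf v₁).card:ℤ) + (((Cf w).card:ℤ)
          + ∑ v ∈ (Finset.univ.erase v₁).erase w, ((Cf v).card:ℤ)) = (Sf.card:ℤ) := by
        rw [← hsum, ← hsplit, ← hsplit2]; push_cast; ring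
      have : (2:ℤ) ≤ ((Cf w).card:ℤ) := by nlinarith [hNcard]
      exact_mod_cast this
    -- master lemma: at every point of C v₁ at most k+1 directions are spanned
    have hrall : ∀ y ∈ Cf v₁, ((((Cf v₁).erase y).image (slp y)).card : ℤ) ≤ (k:ℤ) + 1 := by
      intro y hy
      have hyS : y ∈ Sf := ((hCmem _ y).mp hy).1
      have hylab : label y = v₁ := ((hCmem _ y).mp hy).2
      set E := (Cf v₁).erase y with hE
      have hEcard : E.card = q - 1 := by rw [hE, Finset.card_erase_of_mem hy, hc1]
      set D := E.image (slp y) with hD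
      have hfib : ∑ m ∈ D, (E.filter (fun z => slp y z = m)).card = E.card :=
        (Finset.card_eq_sum_card_fiberwise (fun x hx => Finset.mem_image_of_mem _ hx)).symm
      -- each spanned line meets S only inside C v₁
      have hline : ∀ m ∈ D,
          (Finset.univ.filter (fun z => z ≠ y ∧ slp y z = m)) ∩ Sf
            = E.filter (fun z => slp y z = m) := by
        intro m hm
        obtain ⟨z₀, hz₀E, hz₀m⟩ := Finset.mem_image.mp hm
        obtain ⟨hz₀y, hz₀C⟩ := Finset.mem_erase.mp hz₀E
        have hz₀S : z₀ ∈ Sf := ((hCmem _ z₀).mp hz₀C).1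
        have hz₀lab : label z₀ = v₁ := ((hCmem _ z₀).mp hz₀C).2
        obtain ⟨s, hs0, hse⟩ := (mem_line_iff y m z₀).mp ⟨hz₀y, hz₀m⟩
        ext z
        simp only [Finset.mem_inter, Finset.mem_filter, Finset.mem_univ, true_and]
        constructor
        · rintro ⟨⟨hzy, hzm⟩, hzS⟩
          obtain ⟨t, ht0, hte⟩ := (mem_line_iff y m z).mp ⟨hzy, hzm⟩
          have hlz := hcl y z₀ z hyS hz₀S hzS (Ne.symm hz₀y) (hylab.trans hz₀lab.symm)
            ⟨y, dirv m, 0, s, t, by simp, hse, hte⟩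
          refine ⟨Finset.mem_erase.mpr ⟨hzy, (hCmem _ z).mpr ⟨hzS, hlz.trans hylab⟩⟩, hzm⟩
        · rintro ⟨hzE, hzm⟩
          obtain ⟨hzy, hzC⟩ := Finset.mem_erase.mp hzE
          exact ⟨⟨hzy, hzm⟩, ((hCmem _ z).mp hzC).1⟩
      set Miss : Option F → Finset (Fin 2 → F) :=
        fun m => (Finset.univ.filter (fun z => z ≠ y ∧ slp y z = m)) \ Sf with hMiss
      have hdisj : ∀ m ∈ D, ∀ m' ∈ D, m ≠ m' → Disjoint (Miss m) (Miss m') := by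
        intro m _ m' _ hmm'
        rw [Finset.disjoint_left]
        intro z hz hz'
        rw [hMiss, Finset.mem_sdiff, Finset.mem_filter] at hz hz'
        exact hmm' (hz.1.2.2.symm.trans hz'.1.2.2)
      have hMcard : ∀ m ∈ D, ((Miss m).card : ℤ)
          = ((q:ℤ) - 1) - ((E.filter (fun z => slp y z = m)).card : ℤ) := by
        intro m hm
        simp only [hMiss]
        have h1 : (Finset.univ.filter (fun z => z ≠ y ∧ slp y z = m)).card = q - 1 := by
          rw [line_card, hcard]
        have h2' := Finset.card_inter_add_card_sdiff
          (Finset.univ.filter (fun z => z ≠ y ∧ slp y z = m)) Sf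
        rw [hline m hm, h1] at h2'
        have hq1 : 1 ≤ q := by omega
        omega
      have hcount : ∑ m ∈ D, ((Miss m).card:ℤ) ≤ (k:ℤ) * q := by
        have hb := Finset.card_biUnion hdisj
        have hsub : D.biUnion Miss ⊆ Finset.univ \ Sf := by
          intro z hz
          obtain ⟨m, _, hzm⟩ := Finset.mem_biUnion.mp hz
          rw [hMiss, Finset.mem_sdiff, Finset.mem_filter] at hzm
          exact Finset.mem_sdiff.mpr ⟨Finset.mem_univ _, hzm.2⟩
        have hle := Finset.card_le_card hsub
        rw [hb] at hle
        calc ∑ m ∈ D, ((Miss m).card:ℤ) = ((∑ m ∈ D, (Miss m).card : ℕ) : ℤ) := by push_cast; ring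
          _ ≤ (((Finset.univ \ Sf).card : ℕ) : ℤ) := by exact_mod_cast hle
          _ ≤ (k:ℤ) * q := hmiss
      have hsum2 : ∑ m ∈ D, (((q:ℤ) - 1) - ((E.filter (fun z => slp y z = m)).card : ℤ))
          ≤ (k:ℤ) * q := by
        rw [← Finset.sum_congr rfl hMcard]
        exact hcount
      have htsum : ∑ m ∈ D, ((E.filter (fun z => slp y z = m)).card : ℤ) = (q:ℤ) - 1 := by
        have : ((∑ m ∈ D, (E.filter (fun z => slp y z = m)).card : ℕ):ℤ) = ((E.card:ℕ):ℤ) := by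
          exact_mod_cast hfib
        push_cast at this
        rw [this, hEcard]
        have hq1 : 1 ≤ q := by omega
        push_cast [hq1]
        ring
      rw [Finset.sum_sub_distrib, htsum, Finset.sum_const, nsmul_eq_mul] at hsum2
      -- (D.card)*(q-1) - (q-1) ≤ kq ; conclude D.card ≤ k+1
      by_contra hDk
      push_neg at hDk
      have : (k:ℤ) + 2 ≤ (D.card:ℤ) := by omega
      nlinarith [hsum2, hq3Z]
    by_cases hcol : Collinear F (↑(Cf v₁) : Set (Fin 2 → F))
    · -- C v₁ is a full line; every other class lies on a parallel line: pigeonhole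
      have hCne : (Cf v₁).Nonempty := Finset.card_pos.mp (by omega)
      obtain ⟨y, hy⟩ := hCne
      have hyS : y ∈ Sf := ((hCmem _ y).mp hy).1
      have hylab : label y = v₁ := ((hCmem _ y).mp hy).2
      obtain ⟨z, hzC, hzy⟩ : ∃ z ∈ Cf v₁, z ≠ y := by
        obtain ⟨a, ha, b, hb, hab⟩ := Finset.one_lt_card.mp (show 1 < (Cf v₁).card by omega)
        rcases eq_or_ne a y with rfl | hay
        · exact ⟨b, hb, Ne.symm hab⟩
        · exact ⟨a, ha, hay⟩
      set m₀ := slp y z with hm₀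
      obtain ⟨tz, htz0, htz⟩ := (mem_line_iff y m₀ z).mp ⟨hzy, rfl⟩
      obtain ⟨vd, hvd⟩ :=
        (collinear_iff_of_mem (show y ∈ (↑(Cf v₁) : Set (Fin 2 → F)) from hy)).mp hcol
      obtain ⟨rz, hrz⟩ := hvd z hzC
      have hrz' : z = y + rz • vd := by rw [hrz]; funext i; simp [vadd_eq_add]; ring
      have hrz0 : rz ≠ 0 := by
        rintro rfl
        apply hzy
        rw [hrz']; simp
      have hvd0 : transv m₀ vd = 0 := by
        have h1 : transv m₀ z = transv m₀ y + rz * transv m₀ vd := by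
          rw [hrz', transv_add, transv_smul]
        have h2 : transv m₀ z = transv m₀ y := (transv_eq_iff m₀ y z).mpr ⟨tz, htz⟩
        have := h2 ▸ h1
        have h3 : rz * transv m₀ vd = 0 := by linear_combination -this
        exact (mul_eq_zero.mp h3).resolve_left hrz0
      set c₀ := transv m₀ y with hc₀
      set Φ := Finset.univ.filter (fun z' => transv m₀ z' = c₀) with hΦ
      have hCΦ : Cf v₁ = Φ := by
        apply Finset.eq_of_subset_of_card_le
        · intro z' hz'
          obtain ⟨r', hr'⟩ := hvd z' hz'
          have hz'' : z' = y + r' • vd := by rw [hr']; funext i; simp [vadd_eq_add]; ring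
          rw [hΦ, Finset.mem_filter]
          refine ⟨Finset.mem_univ _, ?_⟩
          rw [hz'', transv_add, transv_smul, hvd0, hc₀]; ring
        · rw [hΦ]
          have := fiber_card (F := F) m₀ c₀
          rw [hcard] at this
          rw [this, hc1]
      have hconst : ∀ w, w ≠ v₁ → ∀ P ∈ Cf w, ∀ Q ∈ Cf w, transv m₀ P = transv m₀ Q := by
        intro w hw P hP Q hQ
        by_contra hne
        have hPQ : P ≠ Q := fun h => hne (by rw [h])
        have hPS : P ∈ Sf := ((hCmem _ P).mp hP).1
        have hQS : Q ∈ Sf := ((hCmem _ Q).mp hQ).1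
        have hden : transv m₀ Q - transv m₀ P ≠ 0 := sub_ne_zero.mpr (fun h => hne h.symm)
        set τ := (c₀ - transv m₀ P) / (transv m₀ Q - transv m₀ P) with hτ
        set x := P + τ • (Q - P) with hx
        have hxf : transv m₀ x = c₀ := by
          rw [hx, transv_affine, hτ, div_mul_cancel₀ _ hden]; ring
        have hxC : x ∈ Cf v₁ := by
          rw [hCΦ]; exact Finset.mem_filter.mpr ⟨Finset.mem_univ _, hxf⟩
        have hxS : x ∈ Sf := ((hCmem _ x).mp hxC).1
        have hQeq : Q = P + (1:F) • (Q - P) := by funext i; simp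
        have hlab := hcl P Q x hPS hQS hxS hPQ
          ((((hCmem _ P).mp hP).2).trans (((hCmem _ Q).mp hQ).2).symm)
          ⟨P, Q - P, 0, 1, τ, by simp, hQeq, hx⟩
        have hv1w : v₁ = w := by
          rw [← ((hCmem _ x).mp hxC).2, hlab, ((hCmem _ P).mp hP).2]
        exact hw hv1w.symm
      have hneq : ∀ w, w ≠ v₁ → ∀ P ∈ Cf w, transv m₀ P ≠ c₀ := by
        intro w hw P hP h
        have hPC : P ∈ Cf v₁ := by
          rw [hCΦ]; exact Finset.mem_filter.mpr ⟨Finset.mem_univ _, h⟩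
        exact hw (by rw [← ((hCmem _ P).mp hP).2, ((hCmem _ P).mp hPC).2])
      set g : Fin (q+1) → F := fun v => if h : (Cf v).Nonempty then transv m₀ h.choose else 0
        with hg
      have hmapsto : ∀ v ∈ Finset.univ.erase v₁, g v ∈ Finset.univ.erase c₀ := by
        intro v hv
        have hv1 : v ≠ v₁ := (Finset.mem_erase.mp hv).1
        have hne : (Cf v).Nonempty := Finset.card_pos.mp (by have := h2 v hv1; omega)
        have hgv : g v = transv m₀ hne.choose := by rw [hg]; exact dif_pos hne
        rw [hgv]
        exact Finset.mem_erase.mpr ⟨hneq v hv1 _ hne.choose_spec, Finset.mem_univ _⟩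
      have hlt : (Finset.univ.erase c₀).card < (Finset.univ.erase v₁).card := by
        rw [Finset.card_erase_of_mem (Finset.mem_univ _),
          Finset.card_erase_of_mem (Finset.mem_univ _), Finset.card_univ, Finset.card_univ,
          hcard, Fintype.card_fin]
        omega
      obtain ⟨a, ha, b, hb, hab, hgab⟩ :=
        Finset.exists_ne_map_eq_of_card_lt_of_maps_to hlt hmapsto
      have ha1 : a ≠ v₁ := (Finset.mem_erase.mp ha).1
      have hb1 : b ≠ v₁ := (Finset.mem_erase.mp hb).1
      have hna : (Cf a).Nonempty := Finset.card_pos.mp (by have := h2 a ha1; omega)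
      have hnb : (Cf b).Nonempty := Finset.card_pos.mp (by have := h2 b hb1; omega)
      obtain ⟨Q, hQb, Q', hQ'b, hQQ'⟩ :=
        Finset.one_lt_card.mp (show 1 < (Cf b).card by have := h2 b hb1; omega)
      have hPa : hna.choose ∈ Cf a := hna.choose_spec
      have hga : g a = transv m₀ hna.choose := by rw [hg]; exact dif_pos hna
      have hgb : g b = transv m₀ hnb.choose := by rw [hg]; exact dif_pos hnb
      have hTPQ : transv m₀ hna.choose = transv m₀ Q := by
        rw [← hga, hgab, hgb]
        exact hconst b hb1 _ hnb.choose_spec Q hQb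
      have hTQ'Q : transv m₀ Q' = transv m₀ Q := hconst b hb1 Q' hQ'b Q hQb
      obtain ⟨t1, ht1⟩ := (transv_eq_iff m₀ Q Q').mp hTQ'Q
      obtain ⟨t2, ht2⟩ := (transv_eq_iff m₀ Q hna.choose).mp hTPQ
      have hQS : Q ∈ Sf := ((hCmem _ Q).mp hQb).1
      have hQ'S : Q' ∈ Sf := ((hCmem _ Q').mp hQ'b).1
      have hPS : hna.choose ∈ Sf := ((hCmem _ hna.choose).mp hPa).1
      have hlab := hcl Q Q' hna.choose hQS hQ'S hPS hQQ'
        ((((hCmem _ Q).mp hQb).2).trans (((hCmem _ Q').mp hQ'b).2).symm)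
        ⟨Q, dirv m₀, 0, t1, t2, by simp, ht1, ht2⟩
      have : a = b := by
        rw [← ((hCmem _ hna.choose).mp hPa).2, hlab, ((hCmem _ Q).mp hQb).2]
      exact hab this
    · -- C v₁ not collinear : too many directions at some point
      have hCne : (Cf v₁).Nonempty := Finset.card_pos.mp (by omega)
      obtain ⟨y, hy⟩ := hCne
      set E := (Cf v₁).erase y with hE
      have hEcard : E.card = q - 1 := by rw [hE, Finset.card_erase_of_mem hy, hc1]
      set D := E.image (slp y) with hD
      have hfib : ∑ m ∈ D, (E.filter (fun z => slp y z = m)).card = E.card :=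
        (Finset.card_eq_sum_card_fiberwise (fun x hx => Finset.mem_image_of_mem _ hx)).symm
      have hDle : (D.card:ℤ) ≤ (k:ℤ) + 1 := hrall y hy
      have hDlen : D.card ≤ k + 1 := by exact_mod_cast hDle
      obtain ⟨m₀, hm₀D, hm₀big⟩ : ∃ m ∈ D, k + 1 ≤ (E.filter (fun z => slp y z = m)).card := by
        by_contra hnone
        push_neg at hnone
        have hle : E.card ≤ D.card * k := by
          rw [← hfib]
          calc ∑ m ∈ D, (E.filter (fun z => slp y z = m)).card
              ≤ ∑ _m ∈ D, k := Finset.sum_le_sum (fun m hm => by have := hnone m hm; omega)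
            _ = D.card * k := by rw [Finset.sum_const, smul_eq_mul]
        have h1 : ((q:ℤ) - 1) ≤ (D.card:ℤ) * k := by
          have := hEcard ▸ hle
          have hq1 : 1 ≤ q := by omega
          have hcast : ((q - 1 : ℕ):ℤ) = (q:ℤ) - 1 := by push_cast [Nat.cast_sub hq1]; ring
          calc ((q:ℤ) - 1) = ((q - 1 : ℕ):ℤ) := hcast.symm
            _ ≤ ((D.card * k : ℕ):ℤ) := by exact_mod_cast this
            _ = (D.card:ℤ) * k := by push_cast; ring
        nlinarith [hkqZ, hDle, h1]
      obtain ⟨y', hy'C, hy'y, hy'm⟩ : ∃ y' ∈ Cf v₁, y' ≠ y ∧ slp y y' ≠ m₀ := by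
        by_contra hall
        push_neg at hall
        apply hcol
        rw [collinear_iff_of_mem (show y ∈ (↑(Cf v₁) : Set (Fin 2 → F)) from hy)]
        refine ⟨dirv m₀, ?_⟩
        intro p hp
        rcases eq_or_ne p y with rfl | hpy
        · exact ⟨0, by funext i; simp [vadd_eq_add]⟩
        · have hm := hall p (Finset.mem_coe.mp hp) hpy
          obtain ⟨t, ht0, hte⟩ := (mem_line_iff y m₀ p).mp ⟨hpy, hm⟩
          exact ⟨t, by rw [hte]; funext i; simp [vadd_eq_add]; ring⟩
      set A := insert y (E.filter (fun z => slp y z = m₀)) with hA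
      have hynotE : y ∉ E.filter (fun z => slp y z = m₀) :=
        fun h => (Finset.mem_erase.mp (Finset.mem_filter.mp h).1).1 rfl
      have hAcard : A.card = (E.filter (fun z => slp y z = m₀)).card + 1 :=
        Finset.card_insert_of_notMem hynotE
      have hy'A : y' ∉ A := by
        rw [hA]
        intro h
        rcases Finset.mem_insert.mp h with h | h
        · exact hy'y h
        · exact hy'm (Finset.mem_filter.mp h).2
      have hAsub : A ⊆ (Cf v₁).erase y' := by
        intro zz hzz
        refine Finset.mem_erase.mpr ⟨fun h => hy'A (h ▸ hzz), ?_⟩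
        rcases Finset.mem_insert.mp hzz with rfl | h
        · exact hy
        · exact (Finset.mem_erase.mp (Finset.mem_filter.mp h).1).2
      have hparam : ∀ zz ∈ A, ∃ t : F, zz = y + t • dirv m₀ := by
        intro zz hzz
        rcases Finset.mem_insert.mp hzz with rfl | h
        · exact ⟨0, by funext i; simp⟩
        · have hmf := Finset.mem_filter.mp h
          obtain ⟨t, _, hte⟩ := (mem_line_iff y m₀ zz).mp ⟨(Finset.mem_erase.mp hmf.1).1, hmf.2⟩
          exact ⟨t, hte⟩
      have hAinj : Set.InjOn (slp y') ↑A := by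
        intro a2 ha2 b2 hb2 hab2
        by_contra hne2
        rw [Finset.mem_coe] at ha2 hb2
        obtain ⟨ta, hta⟩ := hparam a2 ha2
        obtain ⟨tb, htb⟩ := hparam b2 hb2
        have hay' : a2 ≠ y' := fun h => hy'A (h ▸ ha2)
        have hby' : b2 ≠ y' := fun h => hy'A (h ▸ hb2)
        obtain ⟨sA, hs0, hsa⟩ := (mem_line_iff y' (slp y' a2) a2).mp ⟨hay', rfl⟩
        obtain ⟨u, hu0, hub⟩ := (mem_line_iff y' (slp y' a2) b2).mp ⟨hby', hab2.symm⟩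
        have hus : u ≠ sA := by
          intro h
          apply hne2
          rw [hsa, hub, h]
        have hy'eq : y' = y + ((u * ta - sA * tb) / (u - sA)) • dirv m₀ := by
          funext i
          have h1 := congrFun hsa i
          have h2 := congrFun hub i
          have h3 := congrFun hta i
          have h4 := congrFun htb i
          simp only [Pi.add_apply, Pi.smul_apply, smul_eq_mul] at h1 h2 h3 h4 ⊢
          have hscaled : (u - sA) * (y' i - y i) = (u * ta - sA * tb) * dirv m₀ i := by
            linear_combination u * h3 - sA * h4 - u * h1 + sA * h2
          have h5 : y' i - y i = (u * ta - sA * tb) / (u - sA) * dirv m₀ i := by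
            rw [div_mul_eq_mul_div, eq_div_iff (sub_ne_zero.mpr hus)]
            linear_combination hscaled
          linear_combination h5
        rcases dirv_param_eq _ hy'eq with h | h
        · exact hy'y h
        · exact hy'm h
      have hcard2 : A.card ≤ (((Cf v₁).erase y').image (slp y')).card :=
        Finset.card_le_card_of_injOn (slp y')
          (fun zz hzz => Finset.mem_image_of_mem _ (hAsub hzz)) hAinj
      have hk2 := hrall y' hy'C
      omega
  · -- Case |C v₁| = q+1 : every other class is a singleton, too few points
    have hone : ∀ v, v ≠ v₁ → (Cf v).card ≤ 1 := by
      intro v hv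
      rw [Finset.card_le_one]
      intro a ha b hb
      by_contra hab
      rw [hCmem] at ha hb
      have hal : label a ≠ v₁ := by rw [ha.2]; exact hv
      have himg : (Cf v₁).image (slp a) = Finset.univ := by
        apply Finset.eq_univ_of_card
        rw [Finset.card_image_of_injOn (hinj a ha.1 hal), hc1, Fintype.card_option, hcard]
      have hmem : slp a b ∈ (Cf v₁).image (slp a) := by
        rw [himg]; exact Finset.mem_univ _
      obtain ⟨x, hx, hxs⟩ := Finset.mem_image.mp hmem
      rw [hCmem] at hx
      have hba : b ≠ a := fun h => hab (h.symm)
      have hxa : x ≠ a := fun h => hal (by rw [← h, hx.2])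
      obtain ⟨s, hs0, hsb⟩ := (mem_line_iff a (slp a b) b).mp ⟨hba, rfl⟩
      obtain ⟨t, ht0, htx⟩ := (mem_line_iff a (slp a b) x).mp ⟨hxa, hxs⟩
      have hlab := hcl a b x ha.1 hb.1 hx.1 (fun h => hab h) (ha.2.trans hb.2.symm)
        ⟨a, dirv (slp a b), 0, s, t, by simp, hsb, htx⟩
      exact hv (by rw [← hx.2, hlab, ha.2])
    have hsplit : (Cf v₁).card + ∑ v ∈ Finset.univ.erase v₁, (Cf v).card = ∑ v, (Cf v).card :=
      Finset.add_sum_erase _ (fun v => (Cf v).card) (Finset.mem_univ v₁)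
    have hbound : (∑ v ∈ Finset.univ.erase v₁, ((Cf v).card:ℤ)) ≤ (q:ℤ) := by
      calc ∑ v ∈ Finset.univ.erase v₁, ((Cf v).card:ℤ)
          ≤ ∑ _v ∈ Finset.univ.erase v₁, (1:ℤ) :=
            Finset.sum_le_sum (fun v hv => by
              have := hone v (Finset.mem_erase.mp hv).1; exact_mod_cast this)
        _ = (q:ℤ) := by
            rw [Finset.sum_const, Finset.card_erase_of_mem (Finset.mem_univ _),
              Finset.card_univ, Fintype.card_fin]
            push_cast; ring
    have hcast : ((Cf v₁).card:ℤ) + ∑ v ∈ Finset.univ.erase v₁, ((Cf v).card:ℤ) = (Sf.card:ℤ) := by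
      rw [← hsum, ← hsplit]; push_cast; ring
    have hc1Z : ((Cf v₁).card:ℤ) = (q:ℤ) + 1 := by exact_mod_cast hc1
    nlinarith [hNcard, hq3Z]
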